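/- The period doubling subshift generated by the coding sequences (a_k) = (a,b,a,b,...) and (n_k) = (2,2,2,...) coincides with the subshift generated by the period doubling substitution σ: a ↦ ab, b ↦ aa; concretely, for every k ≥ 0 one has p^(k) a_{k+1} = σ^{k+1}(a). -/

import Mathlib

def pBlock {A : Type*} (a : ℕ → A) (n : ℕ → ℕ) : ℕ → List A
  | 0 => []
  | k + 1 => (List.replicate (n k - 1) (pBlock a n k ++ [a k])).flatten ++ pBlock a n k

def pInf {A : Type*} (a : ℕ → A) (n : ℕ → ℕ) : ℕ → A :=
  fun i => (pBlock a n (i + 2)).getD i (a 0)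

def occursIn2 {A : Type*} (u : List A) (ω : ℤ → A) : Prop :=
  ∃ j : ℤ, ∀ i : Fin u.length, u.get i = ω (j + (i : ℕ))

def occursIn1 {A : Type*} (u : List A) (ρ : ℕ → A) : Prop :=
  ∃ j : ℕ, ∀ i : Fin u.length, u.get i = ρ (j + (i : ℕ))

def subshiftOf {A : Type*} (ρ : ℕ → A) : Set (ℤ → A) :=
  {ω | ∀ u : List A, occursIn2 u ω → occursIn1 u ρ}

/-- The period doubling substitution `σ : a ↦ ab, b ↦ aa` on the alphabet
`{a, b} = {true, false}`. -/
def pdSub : Bool → List Bool := fun x => if x then [true, false] else [true, true]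

/-- The substitution extended to words by concatenation. -/
def pdSubst (w : List Bool) : List Bool := (w.map pdSub).flatten

/-- The alternating coding sequence `(a_k) = (a, b, a, b, ...)` with `a = true`. -/
def pdCoding : ℕ → Bool := fun k => if k % 2 = 0 then true else false

/-- The fixed point `σ^∞(a)` of the period doubling substitution. -/
def pdFix : ℕ → Bool := fun i => (pdSubst^[i + 1] [true]).getD i true

lemma pB_succ (k : ℕ) : pBlock pdCoding (fun _ => 2) (k+1)
    = (pBlock pdCoding (fun _ => 2) k ++ [pdCoding k]) ++ pBlock pdCoding (fun _ => 2) k := by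
  simp [pBlock]

lemma pdSubst_append (x y : List Bool) : pdSubst (x ++ y) = pdSubst x ++ pdSubst y := by
  simp [pdSubst]

lemma pdSub_coding (k : ℕ) : pdSub (pdCoding k) = [true, pdCoding (k+1)] := by
  rcases Nat.mod_two_eq_zero_or_one k with h | h <;>
    · have h' : (k+1) % 2 = 1 - k % 2 := by omega
      simp [pdCoding, pdSub, h, h']

lemma keyL (k : ℕ) : pdSubst (pBlock pdCoding (fun _ => 2) k ++ [pdCoding k])
    = pBlock pdCoding (fun _ => 2) (k+1) ++ [pdCoding (k+1)] := by
  induction k with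
  | zero => simp [pBlock, pdSubst, pdSub, pdCoding]
  | succ k ih =>
    have hcancel : pdSubst (pBlock pdCoding (fun _ => 2) k) ++ [true]
        = pBlock pdCoding (fun _ => 2) (k+1) := by
      apply List.append_cancel_right (as := _) (bs := [pdCoding (k+1)])
      rw [List.append_assoc]
      calc pdSubst (pBlock pdCoding (fun _ => 2) k) ++ ([true] ++ [pdCoding (k+1)])
          = pdSubst (pBlock pdCoding (fun _ => 2) k ++ [pdCoding k]) := by
            rw [pdSubst_append]
            simp [pdSubst, pdSub_coding k]
        _ = _ := ih
    have e1 : pdSubst (pBlock pdCoding (fun _ => 2) (k+1))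
        = (pBlock pdCoding (fun _ => 2) (k+1) ++ [pdCoding (k+1)])
          ++ pdSubst (pBlock pdCoding (fun _ => 2) k) := by
      conv_lhs => rw [pB_succ k, pdSubst_append, ih]
    have e2 : pdSubst [pdCoding (k+1)] = [true] ++ [pdCoding (k+2)] := by
      simp [pdSubst, pdSub_coding]
    rw [pdSubst_append, e1, e2, pB_succ (k+1), ← hcancel]
    simp

lemma keyIter (k : ℕ) : pBlock pdCoding (fun _ => 2) k ++ [pdCoding k]
    = pdSubst^[k] [true] := by
  induction k with
  | zero => simp [pBlock, pdCoding]
  | succ k ih =>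
    rw [Function.iterate_succ_apply', ← ih, keyL]

lemma len_pB (k : ℕ) : k ≤ (pBlock pdCoding (fun _ => 2) k).length := by
  induction k with
  | zero => simp
  | succ k ih => rw [pB_succ]; simp; omega

lemma pInf_eq_pdFix : pInf pdCoding (fun _ => 2) = pdFix := by
  funext i
  have hlen : i < (pBlock pdCoding (fun _ => 2) (i+1) ++ [pdCoding (i+1)]).length := by
    have := len_pB (i+1); simp; omega
  have hlen' : i < (pBlock pdCoding (fun _ => 2) (i+1)).length := by
    have := len_pB (i+1); omega
  show (pBlock pdCoding (fun _ => 2) (i + 2)).getD i (pdCoding 0)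
      = (pdSubst^[i + 1] [true]).getD i true
  rw [← keyIter (i+1), pB_succ (i+1)]
  rw [List.getD_append _ _ _ _ hlen, List.getD_append _ _ _ _ hlen',
    List.getD_append _ _ _ _ hlen', List.getD_eq_getElem _ _ hlen',
    List.getD_eq_getElem _ _ hlen']

theorem periodDoubling_substitution :
    (∀ k : ℕ, pBlock pdCoding (fun _ => 2) (k + 1) ++ [pdCoding (k + 1)]
        = pdSubst^[k + 1] [true]) ∧
    subshiftOf (pInf pdCoding (fun _ => 2)) = subshiftOf pdFix := by
  exact ⟨fun k => keyIter (k+1), by rw [pInf_eq_pdFix]⟩
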